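/- Let X₁,...,Xₙ be random variables each taking values in a finite set [q], let μ be a probability distribution on [n], and let k be a positive integer. Then there exists t with 0 ≤ t ≤ k-1 such that E_{i₁,...,i_t ~ μ iid} E_{a,b ~ μ iid} I(X_a ; X_b | X_{i₁},...,X_{i_t}) ≤ (log q)/k. -/

import Mathlib

open Finset
open scoped Classical

noncomputable section

/-- Probability of an event under a finitely supported probability mass function. -/
def pr {Ω : Type*} [Fintype Ω] (P : Ω → ℝ) (E : Ω → Prop) : ℝ :=
  ∑ ω, if E ω then P ω else 0

/-- Conditional mutual information `I(A ; B | C)` (in nats) of finitely-valued random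
variables on a finite probability space with pmf `P`, where `C` is a tuple of `t`
conditioning variables. -/
def condMI {Ω : Type*} [Fintype Ω] {q t : ℕ} (P : Ω → ℝ)
    (A B : Ω → Fin q) (C : Ω → (Fin t → Fin q)) : ℝ :=
  ∑ a : Fin q, ∑ b : Fin q, ∑ c : Fin t → Fin q,
    pr P (fun ω => A ω = a ∧ B ω = b ∧ C ω = c) *
      Real.log (pr P (fun ω => A ω = a ∧ B ω = b ∧ C ω = c) * pr P (fun ω => C ω = c) /
        (pr P (fun ω => A ω = a ∧ C ω = c) * pr P (fun ω => B ω = b ∧ C ω = c)))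

section Aux
variable {Ω : Type*} [Fintype Ω] (P : Ω → ℝ)

lemma pr_nonneg (hP : ∀ ω, 0 ≤ P ω) (E : Ω → Prop) : 0 ≤ pr P E :=
  Finset.sum_nonneg fun ω _ => by split <;> simp [hP ω]

lemma pr_mono (hP : ∀ ω, 0 ≤ P ω) {E F : Ω → Prop} (h : ∀ ω, E ω → F ω) :
    pr P E ≤ pr P F := by
  refine Finset.sum_le_sum fun ω _ => ?_
  by_cases hE : E ω
  · simp [hE, h ω hE]
  · simp only [if_neg hE]; split <;> simp [hP ω]

lemma pr_congr {E F : Ω → Prop} (h : ∀ ω, E ω ↔ F ω) : pr P E = pr P F := by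
  unfold pr; exact Finset.sum_congr rfl fun ω _ => by rw [eq_iff_iff.mpr (h ω)]

lemma pr_sum_fiber {α : Type*} [Fintype α] (E : Ω → Prop) (B : Ω → α) :
    ∑ b, pr P (fun ω => E ω ∧ B ω = b) = pr P E := by
  unfold pr
  rw [Finset.sum_comm]
  refine Finset.sum_congr rfl fun ω _ => ?_
  by_cases hE : E ω <;> simp [hE]

variable {q t : ℕ}

lemma pr_marg (A B : Ω → Fin q) (C : Ω → Fin t → Fin q) (a : Fin q) (c : Fin t → Fin q) :
    ∑ b, pr P (fun ω => A ω = a ∧ B ω = b ∧ C ω = c) =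
      pr P (fun ω => A ω = a ∧ C ω = c) := by
  rw [← pr_sum_fiber P (fun ω => A ω = a ∧ C ω = c) B]
  exact Finset.sum_congr rfl fun b _ => pr_congr P fun ω => by tauto

/-- Conditional entropy `H(A | C)`. -/
def pH (A : Ω → Fin q) (C : Ω → (Fin t → Fin q)) : ℝ :=
  -∑ a : Fin q, ∑ c : Fin t → Fin q,
    pr P (fun ω => A ω = a ∧ C ω = c) *
      Real.log (pr P (fun ω => A ω = a ∧ C ω = c) / pr P (fun ω => C ω = c))

lemma pH_nonneg (hP : ∀ ω, 0 ≤ P ω) (A : Ω → Fin q) (C : Ω → (Fin t → Fin q)) :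
    0 ≤ pH P A C := by
  rw [pH, neg_nonneg]
  refine Finset.sum_nonpos fun a _ => Finset.sum_nonpos fun c _ => ?_
  set p := pr P (fun ω => A ω = a ∧ C ω = c) with hp
  have hple : p ≤ pr P (fun ω => C ω = c) := pr_mono P hP fun ω h => h.2
  have hp0 : 0 ≤ p := pr_nonneg P hP _
  have hlog : Real.log (p / pr P (fun ω => C ω = c)) ≤ 0 := by
    rcases hp0.eq_or_lt with h | h
    · rw [← h, zero_div, Real.log_zero]
    · exact Real.log_nonpos (div_nonneg hp0 (hp0.trans hple)) (div_le_one_of_le₀ hple (hp0.trans hple))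
  nlinarith [mul_nonneg hp0 (neg_nonneg.mpr hlog)]

lemma sum_pi_succ {α : Type*} [Fintype α] {m : ℕ} (f : (Fin (m+1) → α) → ℝ) :
    ∑ c', f c' = ∑ b : α, ∑ c : Fin m → α, f (Fin.cons b c) := by
  rw [← (Fin.consEquiv (fun _ => α)).sum_comp f, Fintype.sum_prod_type]
  rfl

lemma pH_cons (A B : Ω → Fin q) (C : Ω → Fin t → Fin q) :
    pH P A (fun ω => Fin.cons (B ω) (C ω)) =
      -∑ a : Fin q, ∑ b : Fin q, ∑ c : Fin t → Fin q,
        pr P (fun ω => A ω = a ∧ B ω = b ∧ C ω = c) *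
          Real.log (pr P (fun ω => A ω = a ∧ B ω = b ∧ C ω = c) /
            pr P (fun ω => B ω = b ∧ C ω = c)) := by
  rw [pH, neg_inj]
  refine Finset.sum_congr rfl fun a _ => ?_
  rw [sum_pi_succ]
  refine Finset.sum_congr rfl fun b _ => Finset.sum_congr rfl fun c _ => ?_
  have h1 : pr P (fun ω => A ω = a ∧ (Fin.cons (B ω) (C ω) : Fin (t+1) → Fin q) = Fin.cons b c)
      = pr P (fun ω => A ω = a ∧ B ω = b ∧ C ω = c) :=
    pr_congr P fun ω => by simp [Fin.cons_inj]
  have h2 : pr P (fun ω => (Fin.cons (B ω) (C ω) : Fin (t+1) → Fin q) = Fin.cons b c)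
      = pr P (fun ω => B ω = b ∧ C ω = c) :=
    pr_congr P fun ω => by simp [Fin.cons_inj]
  rw [h1, h2]

lemma condMI_eq (hP : ∀ ω, 0 ≤ P ω) (A B : Ω → Fin q) (C : Ω → Fin t → Fin q) :
    condMI P A B C = pH P A C - pH P A (fun ω => Fin.cons (B ω) (C ω)) := by
  rw [pH_cons, pH]
  have key : ∀ (a b : Fin q) (c : Fin t → Fin q),
      pr P (fun ω => A ω = a ∧ B ω = b ∧ C ω = c) *
        Real.log (pr P (fun ω => A ω = a ∧ B ω = b ∧ C ω = c) * pr P (fun ω => C ω = c) /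
          (pr P (fun ω => A ω = a ∧ C ω = c) * pr P (fun ω => B ω = b ∧ C ω = c))) =
      pr P (fun ω => A ω = a ∧ B ω = b ∧ C ω = c) *
        Real.log (pr P (fun ω => A ω = a ∧ B ω = b ∧ C ω = c) /
          pr P (fun ω => B ω = b ∧ C ω = c)) -
      pr P (fun ω => A ω = a ∧ B ω = b ∧ C ω = c) *
        Real.log (pr P (fun ω => A ω = a ∧ C ω = c) / pr P (fun ω => C ω = c)) := by
    intro a b c
    set p := pr P (fun ω => A ω = a ∧ B ω = b ∧ C ω = c) with hpdef
    have hp0 : 0 ≤ p := pr_nonneg P hP _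
    rcases hp0.eq_or_lt with h | h
    · rw [← h]; ring
    · have hac : 0 < pr P (fun ω => A ω = a ∧ C ω = c) :=
        lt_of_lt_of_le h (pr_mono P hP fun ω hw => ⟨hw.1, hw.2.2⟩)
      have hbc : 0 < pr P (fun ω => B ω = b ∧ C ω = c) :=
        lt_of_lt_of_le h (pr_mono P hP fun ω hw => ⟨hw.2.1, hw.2.2⟩)
      have hc : 0 < pr P (fun ω => C ω = c) :=
        lt_of_lt_of_le h (pr_mono P hP fun ω hw => hw.2.2)
      rw [Real.log_div (by positivity) (by positivity), Real.log_mul h.ne' hc.ne',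
        Real.log_mul hac.ne' hbc.ne', Real.log_div h.ne' hbc.ne',
        Real.log_div hac.ne' hc.ne']
      ring
  rw [condMI]
  simp only [key, Finset.sum_sub_distrib]
  have marg : ∀ a : Fin q, ∑ b : Fin q, ∑ c : Fin t → Fin q,
      pr P (fun ω => A ω = a ∧ B ω = b ∧ C ω = c) *
        Real.log (pr P (fun ω => A ω = a ∧ C ω = c) / pr P (fun ω => C ω = c)) =
      ∑ c : Fin t → Fin q, pr P (fun ω => A ω = a ∧ C ω = c) *
        Real.log (pr P (fun ω => A ω = a ∧ C ω = c) / pr P (fun ω => C ω = c)) := by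
    intro a
    rw [Finset.sum_comm]
    refine Finset.sum_congr rfl fun c _ => ?_
    rw [← Finset.sum_mul, pr_marg]
  simp only [marg]
  ring

lemma entropy_le (hq : 0 < q) (p : Fin q → ℝ) (hp : ∀ a, 0 ≤ p a) (hp1 : ∑ a, p a = 1) :
    -∑ a, p a * Real.log (p a) ≤ Real.log q := by
  have hq' : (0:ℝ) < q := by exact_mod_cast hq
  have key : ∀ a, -(p a * Real.log (p a)) - p a * Real.log q ≤
      (if p a = 0 then 0 else (1:ℝ)/q) - p a := by
    intro a
    by_cases h : p a = 0
    · simp [h]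
    · have hpa : 0 < p a := (hp a).lt_of_ne (Ne.symm h)
      have hlog := Real.log_le_sub_one_of_pos (x := 1/((q:ℝ) * p a)) (by positivity)
      have h2 : p a * Real.log (1/((q:ℝ) * p a)) ≤ p a * (1/((q:ℝ)*p a) - 1) :=
        mul_le_mul_of_nonneg_left hlog (hp a)
      rw [one_div, Real.log_inv, Real.log_mul hq'.ne' h] at h2
      have h4 : p a * ((((q:ℝ) * p a))⁻¹ - 1) = 1/q - p a := by
        field_simp
      have h5 : p a * -(Real.log q + Real.log (p a)) =
          -(p a * Real.log (p a)) - p a * Real.log q := by ring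
      rw [h5, h4] at h2
      rw [if_neg h]
      linarith
  have hsum := Finset.sum_le_sum (fun a (_ : a ∈ Finset.univ) => key a)
  rw [Finset.sum_sub_distrib, Finset.sum_sub_distrib, hp1] at hsum
  have hS : ∑ a : Fin q, (if p a = 0 then 0 else (1:ℝ)/q) ≤ 1 := by
    calc ∑ a : Fin q, (if p a = 0 then 0 else (1:ℝ)/q)
        ≤ ∑ _a : Fin q, (1:ℝ)/q := by
          refine Finset.sum_le_sum fun a _ => ?_
          split
          · positivity
          · exact le_rfl
      _ = 1 := by
          rw [Finset.sum_const, Finset.card_univ, Fintype.card_fin, nsmul_eq_mul,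
            mul_one_div, div_self hq'.ne']
  have hL : ∑ a, (-(p a * Real.log (p a))) = -∑ a, p a * Real.log (p a) :=
    Finset.sum_neg_distrib _
  have hM : ∑ a, p a * Real.log q = Real.log q := by
    rw [← Finset.sum_mul, hp1, one_mul]
  rw [hL, hM] at hsum
  linarith

lemma pr_true (hP1 : ∑ ω, P ω = 1) : pr P (fun _ => True) = 1 := by
  simpa [pr] using hP1

lemma pr_fiber_sum_one (hP1 : ∑ ω, P ω = 1) (A : Ω → Fin q) :
    ∑ a : Fin q, pr P (fun ω => A ω = a) = 1 := by
  have h := pr_sum_fiber P (fun _ => True) A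
  rw [pr_true P hP1] at h
  rw [← h]
  exact Finset.sum_congr rfl fun a _ => pr_congr P fun ω => by tauto

lemma pH_zero_le (hP : ∀ ω, 0 ≤ P ω) (hP1 : ∑ ω, P ω = 1) (hq : 0 < q)
    (A : Ω → Fin q) (C : Ω → Fin 0 → Fin q) :
    pH P A C ≤ Real.log q := by
  have hC : ∀ (c : Fin 0 → Fin q) (ω : Ω), C ω = c := fun c ω => Subsingleton.elim _ _
  have hpH : pH P A C = -∑ a : Fin q, pr P (fun ω => A ω = a) *
      Real.log (pr P (fun ω => A ω = a)) := by
    rw [pH, neg_inj]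
    refine Finset.sum_congr rfl fun a _ => ?_
    rw [Fintype.sum_unique]
    have h1 : pr P (fun ω => A ω = a ∧ C ω = default) = pr P (fun ω => A ω = a) :=
      pr_congr P fun ω => by simp [hC default ω]
    have h2 : pr P (fun ω => C ω = default) = 1 := by
      rw [pr_congr P (fun ω => by simp [hC default ω] : ∀ ω, (C ω = default) ↔ True), pr_true P hP1]
    rw [h1, h2, div_one]
  rw [hpH]
  exact entropy_le hq _ (fun a => pr_nonneg P hP _) (pr_fiber_sum_one P hP1 A)

end Aux

/-- There is a conditioning depth `t < k` at which the expected (over i.i.d. choices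
from `μ` of the conditioned variables, and of the pair `a, b`) conditional mutual
information `I(X_a ; X_b | X_{i₁},…,X_{i_t})` is at most `log q / k`. -/


theorem stmt_9 {Ω : Type} [Fintype Ω] (P : Ω → ℝ) (hP : ∀ ω, 0 ≤ P ω)
    (hP1 : ∑ ω, P ω = 1) {n q : ℕ} (X : Fin n → Ω → Fin q)
    (μ : Fin n → ℝ) (hμ : ∀ i, 0 ≤ μ i) (hμ1 : ∑ i, μ i = 1)
    (k : ℕ) (hk : 0 < k) :
    ∃ t < k,
      (∑ I : Fin t → Fin n, (∏ s, μ (I s)) *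
          ∑ a, ∑ b, μ a * μ b * condMI P (X a) (X b) (fun ω s => X (I s) ω)) ≤
        Real.log q / k := by
  rcases Nat.eq_zero_or_pos q with hq | hq
  · refine ⟨0, hk, ?_⟩
    subst hq
    simp [condMI]
  set f : ℕ → ℝ := fun t => ∑ I : Fin t → Fin n, (∏ s, μ (I s)) *
      ∑ a, μ a * pH P (X a) (fun ω s => X (I s) ω) with hf
  set g : ℕ → ℝ := fun t => ∑ I : Fin t → Fin n, (∏ s, μ (I s)) *
      ∑ a, ∑ b, μ a * μ b * condMI P (X a) (X b) (fun ω s => X (I s) ω) with hg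
  have key : ∀ (t : ℕ) (I : Fin t → Fin n),
      (∑ a, ∑ b, μ a * μ b * condMI P (X a) (X b) (fun ω s => X (I s) ω)) =
      (∑ a, μ a * pH P (X a) (fun ω s => X (I s) ω)) -
      (∑ b, μ b * ∑ a, μ a *
        pH P (X a) (fun ω => Fin.cons (X b ω) (fun s => X (I s) ω))) := by
    intro t I
    simp only [condMI_eq P hP, mul_sub, Finset.sum_sub_distrib]
    congr 1
    · refine Finset.sum_congr rfl fun a _ => ?_
      calc ∑ b, μ a * μ b * pH P (X a) (fun ω s => X (I s) ω)
          = ∑ b, (μ a * pH P (X a) (fun ω s => X (I s) ω)) * μ b :=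
            Finset.sum_congr rfl fun b _ => by ring
        _ = (μ a * pH P (X a) (fun ω s => X (I s) ω)) * ∑ b, μ b :=
            (Finset.mul_sum _ _ _).symm
        _ = μ a * pH P (X a) (fun ω s => X (I s) ω) := by rw [hμ1, mul_one]
    · rw [Finset.sum_comm]
      refine Finset.sum_congr rfl fun b _ => ?_
      rw [Finset.mul_sum]
      exact Finset.sum_congr rfl fun a _ => by ring
  have hstep : ∀ t : ℕ, g t = f t - f (t + 1) := by
    intro t
    have e2 : f (t+1) = ∑ I : Fin t → Fin n, (∏ s, μ (I s)) *
        ∑ b, μ b * ∑ a, μ a *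
          pH P (X a) (fun ω => Fin.cons (X b ω) (fun s => X (I s) ω)) := by
      rw [hf]
      beta_reduce
      rw [sum_pi_succ (fun J => (∏ s, μ (J s)) *
        ∑ a, μ a * pH P (X a) (fun ω s => X (J s) ω))]
      rw [Finset.sum_comm]
      refine Finset.sum_congr rfl fun I _ => ?_
      rw [Finset.mul_sum]
      refine Finset.sum_congr rfl fun b _ => ?_
      have hC : (fun ω s => X ((Fin.cons b I : Fin (t+1) → Fin n) s) ω) =
          (fun ω => Fin.cons (X b ω) (fun s => X (I s) ω)) := by
        funext ω s
        refine Fin.cases ?_ ?_ s <;> simp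
      rw [hC, Fin.prod_univ_succ]
      simp only [Fin.cons_zero, Fin.cons_succ]
      ring
    rw [e2, hg, hf]
    beta_reduce
    rw [← Finset.sum_sub_distrib]
    refine Finset.sum_congr rfl fun I _ => ?_
    rw [key t I, mul_sub]
  have hf0 : f 0 ≤ Real.log q := by
    rw [hf]
    beta_reduce
    rw [Fintype.sum_unique]
    have : (∏ s : Fin 0, μ ((default : Fin 0 → Fin n) s)) = 1 := by simp
    rw [this, one_mul]
    calc ∑ a, μ a * pH P (X a) (fun ω s => X ((default : Fin 0 → Fin n) s) ω)
        ≤ ∑ a, μ a * Real.log q :=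
          Finset.sum_le_sum fun a _ => mul_le_mul_of_nonneg_left
            (pH_zero_le P hP hP1 hq _ _) (hμ a)
      _ = Real.log q := by rw [← Finset.sum_mul, hμ1, one_mul]
  have hfk : 0 ≤ f k := by
    rw [hf]
    beta_reduce
    refine Finset.sum_nonneg fun I _ => mul_nonneg
      (Finset.prod_nonneg fun s _ => hμ _)
      (Finset.sum_nonneg fun a _ => mul_nonneg (hμ a) (pH_nonneg P hP _ _))
  have htel : ∑ t ∈ Finset.range k, g t = f 0 - f k := by
    simp only [hstep]
    exact Finset.sum_range_sub' f k
  by_contra hcon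
  push_neg at hcon
  have hlt : ∀ t ∈ Finset.range k, Real.log q / k < g t := fun t ht =>
    hcon t (Finset.mem_range.mp ht)
  have hsum := Finset.sum_lt_sum_of_nonempty
    (Finset.nonempty_range_iff.mpr hk.ne') hlt
  rw [Finset.sum_const, Finset.card_range, nsmul_eq_mul,
    mul_div_cancel₀ _ (Nat.cast_ne_zero.mpr hk.ne' : (k:ℝ) ≠ 0)] at hsum
  linarith
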